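/- arXiv:2405.04243 — 2 statements merged into one kernel-verified Lean document; each statement's English description precedes it below -/
import Mathlib

section
/- Average heat released by the dephased qubit engine: in the qubit Otto setup, the dephased average heat released ⟨⟨Q_C⟩⟩ := Tr[ρ₁ H₁] − Tr[V Δ₂(Φ(Δ₂(U ρ₁ U†))) V† H₁] equals −2(θ + (1 − 2θ)(δ′ + ζ − 2δ′ζ)) ν₁ tanh(βν₁); consequently the dephased average work ⟨⟨W⟩⟩ := ⟨⟨Q_M⟩⟩ + ⟨⟨Q_C⟩⟩, with ⟨⟨Q_M⟩⟩ := Tr[Φ(Δ₂(Uρ₁U†))H₂] − Tr[Uρ₁U†H₂], equals 2((1−2δ′)θν₂ − (θ + (1−2θ)(δ′+ζ−2δ′ζ))ν₁) tanh(βν₁). -/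
open Matrix

open Matrix

lemma vmv_mul' (a b : Fin 2 → ℂ) (X : Matrix (Fin 2) (Fin 2) ℂ) :
    vecMulVec a b * X = vecMulVec a (b ᵥ* X) := by
  ext i j
  simp [vecMulVec_apply, mul_apply, vecMul, dotProduct, Finset.mul_sum, mul_assoc, mul_add]

lemma mul_vmv' (c d : Fin 2 → ℂ) (X : Matrix (Fin 2) (Fin 2) ℂ) :
    X * vecMulVec c d = vecMulVec (X *ᵥ c) d := by
  ext i j
  simp only [vecMulVec_apply, mul_apply, mulVec, dotProduct, Fin.sum_univ_two]
  ring

lemma vmv_mul_vmv (a b c d : Fin 2 → ℂ) :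
    vecMulVec a b * vecMulVec c d = (b ⬝ᵥ c) • vecMulVec a d := by
  rw [vmv_mul']
  ext i j
  simp only [vecMulVec_apply, vecMul, dotProduct, Fin.sum_univ_two, Matrix.smul_apply, smul_eq_mul]
  ring

lemma trace_vmv (a b : Fin 2 → ℂ) : (vecMulVec a b).trace = a ⬝ᵥ b := by
  simp [trace, vecMulVec_apply, dotProduct, diag]

lemma trace_mul_vmv (X : Matrix (Fin 2) (Fin 2) ℂ) (v w : Fin 2 → ℂ) :
    (X * vecMulVec v w).trace = w ⬝ᵥ (X *ᵥ v) := by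
  rw [mul_vmv', trace_vmv, dotProduct_comm]

lemma conj_vmv (A : Matrix (Fin 2) (Fin 2) ℂ) (v : Fin 2 → ℂ) :
    A * vecMulVec v (star v) * Aᴴ = vecMulVec (A *ᵥ v) (star (A *ᵥ v)) := by
  rw [mul_vmv', vmv_mul', star_mulVec]

lemma complete (ep em : Fin 2 → ℂ) (hep : star ep ⬝ᵥ ep = 1) (hem : star em ⬝ᵥ em = 1)
    (hepm : star ep ⬝ᵥ em = 0) :
    vecMulVec ep (star ep) + vecMulVec em (star em) = 1 := by
  have hmpe : star em ⬝ᵥ ep = 0 := by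
    have := congrArg star hepm
    rwa [star_dotProduct, star_star, star_zero] at this
  set M : Matrix (Fin 2) (Fin 2) ℂ := Matrix.of (fun i j => if j = 0 then ep i else em i) with hM
  have h1 : Mᴴ * M = 1 := by
    ext i j
    simp only [hM, mul_apply, conjTranspose_apply, Matrix.of_apply, one_apply, Fin.sum_univ_two]
    simp only [dotProduct, Pi.star_apply, Fin.sum_univ_two] at hep hem hepm hmpe
    fin_cases i <;> fin_cases j <;> simp_all
  have h2 : M * Mᴴ = 1 := mul_eq_one_comm.mp h1
  ext i j
  have := congrFun (congrFun h2 i) j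
  simp only [hM, mul_apply, conjTranspose_apply, Matrix.of_apply, Fin.sum_univ_two] at this
  simpa [vecMulVec_apply, mul_comm] using this
open Matrix

lemma exp_vmv (x w : Fin 2 → ℂ) :
    star w ⬝ᵥ (vecMulVec x (star x) *ᵥ w) = (star w ⬝ᵥ x) * star (star w ⬝ᵥ x) := by
  simp only [dotProduct, mulVec, vecMulVec_apply, Fin.sum_univ_two, Pi.star_apply, star_add,
    star_mul', RingHom.map_add, RingHom.map_mul, Complex.star_def, Complex.conj_conj]
  ring

lemma conj_entry (A : Matrix (Fin 2) (Fin 2) ℂ) (v w : Fin 2 → ℂ) :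
    star w ⬝ᵥ (Aᴴ *ᵥ v) = star (star v ⬝ᵥ (A *ᵥ w)) := by
  simp only [dotProduct, mulVec, conjTranspose_apply, Fin.sum_univ_two, Pi.star_apply, star_add,
    star_mul', Complex.star_def, Complex.conj_conj, _root_.map_add, _root_.map_mul]
  ring

/-- Average heat released by the dephased qubit engine: in the qubit Otto
setup the dephased average heat released
`⟨⟨Q_C⟩⟩ := Tr[ρ₁ H₁] − Tr[V Δ₂(Φ(Δ₂(U ρ₁ Uᴴ))) Vᴴ H₁]` equals
`−2 (θ + (1 − 2θ)(δ′ + ζ − 2δ′ζ)) ν₁ tanh(βν₁)`; consequently the dephased average work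
`⟨⟨W⟩⟩ := ⟨⟨Q_M⟩⟩ + ⟨⟨Q_C⟩⟩`, with `⟨⟨Q_M⟩⟩ := Tr[Φ(Δ₂(Uρ₁Uᴴ))H₂] − Tr[Uρ₁UᴴH₂]`, equals
`2 ((1 − 2δ′) θ ν₂ − (θ + (1 − 2θ)(δ′ + ζ − 2δ′ζ)) ν₁) tanh(βν₁)`. -/
theorem dephased_heat_released_and_work_qubit
    (β ν₁ ν₂ : ℝ) (hβ : 0 < β) (hν₁ : 0 < ν₁) (hν₂ : 0 < ν₂)
    (ep em fp fm : Fin 2 → ℂ)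
    (hep : star ep ⬝ᵥ ep = 1) (hem : star em ⬝ᵥ em = 1) (hepm : star ep ⬝ᵥ em = 0)
    (hfp : star fp ⬝ᵥ fp = 1) (hfm : star fm ⬝ᵥ fm = 1) (hfpm : star fp ⬝ᵥ fm = 0)
    (H₁ H₂ ρ₁ : Matrix (Fin 2) (Fin 2) ℂ)
    (hH₁ : H₁ = (ν₁ : ℂ) • (vecMulVec ep (star ep) - vecMulVec em (star em)))
    (hH₂ : H₂ = (ν₂ : ℂ) • (vecMulVec fp (star fp) - vecMulVec fm (star fm)))
    (hρ₁ : ρ₁ = ((2 * Real.cosh (β * ν₁) : ℝ) : ℂ)⁻¹ •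
        ((Real.exp (-(β * ν₁)) : ℂ) • vecMulVec ep (star ep) +
         (Real.exp (β * ν₁) : ℂ) • vecMulVec em (star em)))
    (U V : Matrix (Fin 2) (Fin 2) ℂ)
    (hU : Uᴴ * U = 1) (hU' : U * Uᴴ = 1)
    (hV : Vᴴ * V = 1) (hV' : V * Vᴴ = 1)
    {K : ℕ} (Kr : Fin K → Matrix (Fin 2) (Fin 2) ℂ)
    (hKr : ∑ k, (Kr k)ᴴ * Kr k = 1) (hKr' : ∑ k, Kr k * (Kr k)ᴴ = 1)
    (Φ : Matrix (Fin 2) (Fin 2) ℂ → Matrix (Fin 2) (Fin 2) ℂ)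
    (hΦ : ∀ X, Φ X = ∑ k, Kr k * X * (Kr k)ᴴ)
    (Δ₂ : Matrix (Fin 2) (Fin 2) ℂ → Matrix (Fin 2) (Fin 2) ℂ)
    (hΔ₂ : ∀ X, Δ₂ X = vecMulVec fp (star fp) * X * vecMulVec fp (star fp) +
        vecMulVec fm (star fm) * X * vecMulVec fm (star fm))
    (δ' : ℝ) (hδ' : δ' = ‖star fp ⬝ᵥ (U *ᵥ em)‖ ^ 2)
    (θ : ℂ) (hθ : θ = star fm ⬝ᵥ (Φ (vecMulVec fp (star fp)) *ᵥ fm))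
    (ζ : ℝ) (hζ : ζ = ‖star ep ⬝ᵥ (V *ᵥ fm)‖ ^ 2) :
    (ρ₁ * H₁).trace - (V * Δ₂ (Φ (Δ₂ (U * ρ₁ * Uᴴ))) * Vᴴ * H₁).trace =
      -2 * (θ + (1 - 2 * θ) * ((δ' : ℂ) + (ζ : ℂ) - 2 * (δ' : ℂ) * (ζ : ℂ))) * (ν₁ : ℂ) *
        (Real.tanh (β * ν₁) : ℂ) ∧
    ((Φ (Δ₂ (U * ρ₁ * Uᴴ)) * H₂).trace - (U * ρ₁ * Uᴴ * H₂).trace) +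
      ((ρ₁ * H₁).trace - (V * Δ₂ (Φ (Δ₂ (U * ρ₁ * Uᴴ))) * Vᴴ * H₁).trace) =
      2 * ((1 - 2 * (δ' : ℂ)) * θ * (ν₂ : ℂ) -
          (θ + (1 - 2 * θ) * ((δ' : ℂ) + (ζ : ℂ) - 2 * (δ' : ℂ) * (ζ : ℂ))) * (ν₁ : ℂ)) *
        (Real.tanh (β * ν₁) : ℂ) := by
  -- basis projectors
  set P : Matrix (Fin 2) (Fin 2) ℂ := vecMulVec ep (star ep) with hPdef
  set Q : Matrix (Fin 2) (Fin 2) ℂ := vecMulVec em (star em) with hQdef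
  set Pf : Matrix (Fin 2) (Fin 2) ℂ := vecMulVec fp (star fp) with hPfdef
  set Qf : Matrix (Fin 2) (Fin 2) ℂ := vecMulVec fm (star fm) with hQfdef
  have hPQ : P + Q = 1 := complete ep em hep hem hepm
  have hPQf : Pf + Qf = 1 := complete fp fm hfp hfm hfpm
  -- real coefficients of the Gibbs state
  set αr : ℝ := Real.exp (-(β * ν₁)) / (2 * Real.cosh (β * ν₁)) with hαr
  set γr : ℝ := Real.exp (β * ν₁) / (2 * Real.cosh (β * ν₁)) with hγr
  have hcosh : (2 : ℝ) * Real.cosh (β * ν₁) ≠ 0 := by positivity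
  have hαγR : αr - γr = -Real.tanh (β * ν₁) := by
    rw [hαr, hγr, Real.tanh_eq_sinh_div_cosh, Real.sinh_eq]
    field_simp
    ring
  have hαγ : (αr : ℂ) - (γr : ℂ) = -((Real.tanh (β * ν₁) : ℝ) : ℂ) := by
    exact_mod_cast congrArg (fun x : ℝ => (x : ℂ)) hαγR
  have hρ' : ρ₁ = (αr : ℂ) • P + (γr : ℂ) • Q := by
    rw [hρ₁, smul_add, smul_smul, smul_smul]
    congr 1
    · congr 1
      rw [hαr]; push_cast; ring
    · congr 1
      rw [hγr]; push_cast; ring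
  -- conjugated projectors
  have hA : U * ρ₁ * Uᴴ = (αr : ℂ) • vecMulVec (U *ᵥ ep) (star (U *ᵥ ep)) +
      (γr : ℂ) • vecMulVec (U *ᵥ em) (star (U *ᵥ em)) := by
    rw [hρ', mul_add, add_mul, mul_smul_comm, mul_smul_comm, smul_mul_assoc, smul_mul_assoc,
      hPdef, hQdef, conj_vmv, conj_vmv]
  -- Δ₂ expansion
  have hΔ : ∀ X : Matrix (Fin 2) (Fin 2) ℂ, Δ₂ X =
      (star fp ⬝ᵥ (X *ᵥ fp)) • Pf + (star fm ⬝ᵥ (X *ᵥ fm)) • Qf := by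
    intro X
    rw [hΔ₂, hPfdef, hQfdef]
    rw [vmv_mul', vmv_mul_vmv, vmv_mul', vmv_mul_vmv, ← dotProduct_mulVec, ← dotProduct_mulVec]
  -- transition amplitudes
  set a1 : ℂ := star fp ⬝ᵥ (U *ᵥ ep) with ha1
  set a2 : ℂ := star fp ⬝ᵥ (U *ᵥ em) with ha2
  set a3 : ℂ := star fm ⬝ᵥ (U *ᵥ ep) with ha3
  set a4 : ℂ := star fm ⬝ᵥ (U *ᵥ em) with ha4
  set b1 : ℂ := star ep ⬝ᵥ (V *ᵥ fp) with hb1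
  set b2 : ℂ := star ep ⬝ᵥ (V *ᵥ fm) with hb2
  set b4 : ℂ := star em ⬝ᵥ (V *ᵥ fm) with hb4
  set b3 : ℂ := star em ⬝ᵥ (V *ᵥ fp) with hb3
  -- completeness sandwiches
  have hUrow : U * P * Uᴴ + U * Q * Uᴴ = 1 := by
    rw [← add_mul, ← mul_add, hPQ, mul_one, hU']
  have hUcol : Uᴴ * Pf * (Uᴴ)ᴴ + Uᴴ * Qf * (Uᴴ)ᴴ = 1 := by
    rw [← add_mul, ← mul_add, hPQf, mul_one, conjTranspose_conjTranspose, hU]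
  have hVrow : V * Pf * Vᴴ + V * Qf * Vᴴ = 1 := by
    rw [← add_mul, ← mul_add, hPQf, mul_one, hV']
  have hVcol : Vᴴ * P * (Vᴴ)ᴴ + Vᴴ * Q * (Vᴴ)ᴴ = 1 := by
    rw [← add_mul, ← mul_add, hPQ, mul_one, conjTranspose_conjTranspose, hV]
  -- scalar completeness relations
  have r1 : a1 * star a1 + a2 * star a2 = 1 := by
    have h := congrArg (fun X : Matrix (Fin 2) (Fin 2) ℂ => star fp ⬝ᵥ (X *ᵥ fp)) hUrow
    simp only [hPdef, hQdef, conj_vmv, add_mulVec, dotProduct_add, exp_vmv, one_mulVec,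
      hfp] at h
    rw [← ha1, ← ha2] at h
    exact h
  have r2 : a3 * star a3 + a4 * star a4 = 1 := by
    have h := congrArg (fun X : Matrix (Fin 2) (Fin 2) ℂ => star fm ⬝ᵥ (X *ᵥ fm)) hUrow
    simp only [hPdef, hQdef, conj_vmv, add_mulVec, dotProduct_add, exp_vmv, one_mulVec,
      hfm] at h
    rw [← ha3, ← ha4] at h
    exact h
  have r3 : star a1 * a1 + star a3 * a3 = 1 := by
    have h := congrArg (fun X : Matrix (Fin 2) (Fin 2) ℂ => star ep ⬝ᵥ (X *ᵥ ep)) hUcol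
    simp only [hPfdef, hQfdef, conj_vmv, add_mulVec, dotProduct_add, exp_vmv, one_mulVec,
      hep] at h
    rw [conj_entry, conj_entry, ← ha1, ← ha3] at h
    simpa [mul_comm] using h
  have s1 : b1 * star b1 + b2 * star b2 = 1 := by
    have h := congrArg (fun X : Matrix (Fin 2) (Fin 2) ℂ => star ep ⬝ᵥ (X *ᵥ ep)) hVrow
    simp only [hPfdef, hQfdef, conj_vmv, add_mulVec, dotProduct_add, exp_vmv, one_mulVec,
      hep] at h
    rw [← hb1, ← hb2] at h
    exact h
  have s2 : star b1 * b1 + star b3 * b3 = 1 := by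
    have h := congrArg (fun X : Matrix (Fin 2) (Fin 2) ℂ => star fp ⬝ᵥ (X *ᵥ fp)) hVcol
    simp only [hPdef, hQdef, conj_vmv, add_mulVec, dotProduct_add, exp_vmv, one_mulVec,
      hfp] at h
    rw [conj_entry, conj_entry, ← hb1, ← hb3] at h
    simpa [star_star, mul_comm] using h
  have s3 : star b2 * b2 + star b4 * b4 = 1 := by
    have h := congrArg (fun X : Matrix (Fin 2) (Fin 2) ℂ => star fm ⬝ᵥ (X *ᵥ fm)) hVcol
    simp only [hPdef, hQdef, conj_vmv, add_mulVec, dotProduct_add, exp_vmv, one_mulVec,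
      hfm] at h
    rw [conj_entry, conj_entry, ← hb2, ← hb4] at h
    simpa [star_star, mul_comm] using h
  -- identifications of δ', ζ
  have hδc : (δ' : ℂ) = a2 * star a2 := by
    rw [hδ', Complex.sq_norm, show (star a2 : ℂ) = (starRingEnd ℂ) a2 from rfl]
    exact (Complex.mul_conj a2).symm
  have hζc : (ζ : ℂ) = b2 * star b2 := by
    rw [hζ, Complex.sq_norm, show (star b2 : ℂ) = (starRingEnd ℂ) b2 from rfl]
    exact (Complex.mul_conj b2).symm
  -- channel facts
  have hΦadd : ∀ X Y, Φ (X + Y) = Φ X + Φ Y := by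
    intro X Y
    simp [hΦ, mul_add, add_mul, Finset.sum_add_distrib]
  have hΦsmul : ∀ (c : ℂ) X, Φ (c • X) = c • Φ X := by
    intro c X
    simp [hΦ, Finset.smul_sum, mul_smul_comm, smul_mul_assoc]
  have hΦ1 : Φ 1 = 1 := by
    simp [hΦ, hKr']
  have hΦQf : Φ Qf = 1 - Φ Pf := by
    have h := hΦadd Pf Qf
    rw [hPQf, hΦ1] at h
    rw [eq_comm, sub_eq_iff_eq_add, eq_comm, add_comm]
    exact h.symm
  have hmpe : star em ⬝ᵥ ep = 0 := by
    have := congrArg star hepm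
    rwa [star_dotProduct, star_star, star_zero] at this
  -- trace helpers
  have htrH₁ : ∀ X : Matrix (Fin 2) (Fin 2) ℂ,
      (X * H₁).trace = ↑ν₁ * (star ep ⬝ᵥ (X *ᵥ ep) - star em ⬝ᵥ (X *ᵥ em)) := by
    intro X
    rw [hH₁, hPdef, hQdef]
    rw [Matrix.mul_smul, mul_sub, trace_smul, trace_sub, trace_mul_vmv, trace_mul_vmv,
      smul_eq_mul]
  have htrH₂ : ∀ X : Matrix (Fin 2) (Fin 2) ℂ,
      (X * H₂).trace = ↑ν₂ * (star fp ⬝ᵥ (X *ᵥ fp) - star fm ⬝ᵥ (X *ᵥ fm)) := by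
    intro X
    rw [hH₂, hPfdef, hQfdef]
    rw [Matrix.mul_smul, mul_sub, trace_smul, trace_sub, trace_mul_vmv, trace_mul_vmv,
      smul_eq_mul]
  have htrf : ∀ X : Matrix (Fin 2) (Fin 2) ℂ,
      X.trace = star fp ⬝ᵥ (X *ᵥ fp) + star fm ⬝ᵥ (X *ᵥ fm) := by
    intro X
    conv_lhs => rw [← mul_one X, ← hPQf]
    rw [mul_add, trace_add, hPfdef, hQfdef, trace_mul_vmv, trace_mul_vmv]
  have hΦtr : ∀ X, (Φ X).trace = X.trace := by
    intro X
    rw [hΦ, trace_sum]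
    have : ∀ k : Fin K, (Kr k * X * (Kr k)ᴴ).trace = ((Kr k)ᴴ * Kr k * X).trace := by
      intro k
      rw [trace_mul_comm, ← mul_assoc]
    rw [Finset.sum_congr rfl fun k _ => this k, ← trace_sum, ← Finset.sum_mul, hKr, one_mul]
  -- entries of G = Φ Pf
  have hGfm : star fm ⬝ᵥ (Φ Pf *ᵥ fm) = θ := hθ.symm
  have hGfp : star fp ⬝ᵥ (Φ Pf *ᵥ fp) = 1 - θ := by
    have h1 : (Φ Pf).trace = 1 := by
      rw [hΦtr, hPfdef, trace_vmv, dotProduct_comm]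
      exact hfp
    have h2 := htrf (Φ Pf)
    rw [h1, hGfm] at h2
    linear_combination -h2
  -- populations after U and Δ₂
  set pC : ℂ := ↑αr * (a1 * star a1) + ↑γr * (a2 * star a2) with hpC
  set qC : ℂ := ↑αr * (a3 * star a3) + ↑γr * (a4 * star a4) with hqC
  have hAfp : star fp ⬝ᵥ ((U * ρ₁ * Uᴴ) *ᵥ fp) = pC := by
    rw [hA, hpC, ha1, ha2]
    simp only [add_mulVec, smul_mulVec, dotProduct_add, dotProduct_smul, exp_vmv, smul_eq_mul]
  have hAfm : star fm ⬝ᵥ ((U * ρ₁ * Uᴴ) *ᵥ fm) = qC := by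
    rw [hA, hqC, ha3, ha4]
    simp only [add_mulVec, smul_mulVec, dotProduct_add, dotProduct_smul, exp_vmv, smul_eq_mul]
  have hΔA : Δ₂ (U * ρ₁ * Uᴴ) = pC • Pf + qC • Qf := by
    rw [hΔ, hAfp, hAfm]
  have hΦΔA : Φ (Δ₂ (U * ρ₁ * Uᴴ)) = pC • Φ Pf + qC • (1 - Φ Pf) := by
    rw [hΔA, hΦadd, hΦsmul, hΦsmul, hΦQf]
  have hDfp : star fp ⬝ᵥ (Φ (Δ₂ (U * ρ₁ * Uᴴ)) *ᵥ fp) = pC * (1 - θ) + qC * θ := by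
    rw [hΦΔA]
    simp only [add_mulVec, smul_mulVec, sub_mulVec, one_mulVec, dotProduct_add,
      dotProduct_sub, dotProduct_smul, smul_eq_mul, hfp, hGfp]
    ring
  have hDfm : star fm ⬝ᵥ (Φ (Δ₂ (U * ρ₁ * Uᴴ)) *ᵥ fm) = pC * θ + qC * (1 - θ) := by
    rw [hΦΔA]
    simp only [add_mulVec, smul_mulVec, sub_mulVec, one_mulVec, dotProduct_add,
      dotProduct_sub, dotProduct_smul, smul_eq_mul, hfm, hGfm]
  have hD : Δ₂ (Φ (Δ₂ (U * ρ₁ * Uᴴ))) =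
      (pC * (1 - θ) + qC * θ) • Pf + (pC * θ + qC * (1 - θ)) • Qf := by
    rw [hΔ, hDfp, hDfm]
  -- traces
  have hT1 : (ρ₁ * H₁).trace = ↑ν₁ * (↑αr - ↑γr) := by
    rw [htrH₁, hρ', hPdef, hQdef]
    simp only [add_mulVec, smul_mulVec, dotProduct_add, dotProduct_smul, smul_eq_mul,
      exp_vmv, hep, hem, hepm, hmpe, star_one, star_zero, mul_one, mul_zero, zero_mul]
    ring
  have hVDV : V * Δ₂ (Φ (Δ₂ (U * ρ₁ * Uᴴ))) * Vᴴ =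
      (pC * (1 - θ) + qC * θ) • vecMulVec (V *ᵥ fp) (star (V *ᵥ fp)) +
      (pC * θ + qC * (1 - θ)) • vecMulVec (V *ᵥ fm) (star (V *ᵥ fm)) := by
    rw [hD, mul_add, add_mul, mul_smul_comm, mul_smul_comm, smul_mul_assoc, smul_mul_assoc,
      hPfdef, hQfdef, conj_vmv, conj_vmv]
  have hT2 : (V * Δ₂ (Φ (Δ₂ (U * ρ₁ * Uᴴ))) * Vᴴ * H₁).trace =
      ↑ν₁ * (((pC * (1 - θ) + qC * θ) * (b1 * star b1) +
              (pC * θ + qC * (1 - θ)) * (b2 * star b2)) -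
             ((pC * (1 - θ) + qC * θ) * (b3 * star b3) +
              (pC * θ + qC * (1 - θ)) * (b4 * star b4))) := by
    rw [htrH₁, hVDV, hb1, hb2, hb3, hb4]
    simp only [add_mulVec, smul_mulVec, dotProduct_add, dotProduct_smul, smul_eq_mul,
      exp_vmv]
  have hT3 : (Φ (Δ₂ (U * ρ₁ * Uᴴ)) * H₂).trace =
      ↑ν₂ * ((pC * (1 - θ) + qC * θ) - (pC * θ + qC * (1 - θ))) := by
    rw [htrH₂, hDfp, hDfm]
  have hT4 : (U * ρ₁ * Uᴴ * H₂).trace = ↑ν₂ * (pC - qC) := by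
    rw [htrH₂, hAfp, hAfm]
  -- clean scalar values
  have eA1 : a1 * star a1 = 1 - (δ' : ℂ) := by linear_combination r1 + hδc
  have eA3 : a3 * star a3 = (δ' : ℂ) := by linear_combination r3 - eA1
  have eA4 : a4 * star a4 = 1 - (δ' : ℂ) := by linear_combination r2 - eA3
  have eB1 : b1 * star b1 = 1 - (ζ : ℂ) := by linear_combination s1 + hζc
  have eB2 : b2 * star b2 = (ζ : ℂ) := hζc.symm
  have eB3 : b3 * star b3 = (ζ : ℂ) := by linear_combination s2 - eB1
  have eB4 : b4 * star b4 = 1 - (ζ : ℂ) := by linear_combination s3 - eB2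
  have hτ : ((Real.tanh (β * ν₁) : ℝ) : ℂ) = ↑γr - ↑αr := by linear_combination hαγ
  constructor
  · rw [hT1, hT2, hpC, hqC, eA1, eA3, eA4, ← hδc, eB1, eB2, eB3, eB4, hτ]
    ring
  · rw [hT3, hT4, hT1, hT2, hpC, hqC, eA1, eA3, eA4, ← hδc, eB1, eB2, eB3, eB4, hτ]
    ring
end

section
/- Averages of the undephased qubit engine: in the qubit Otto setup, the undephased average heat released, heat absorbed, and work satisfy Tr[ρ₁ H₁] − Tr[V Φ(U ρ₁ U†) V† H₁] = −2ζᶜ ν₁ tanh(βν₁), Tr[Φ(U ρ₁ U†) H₂] − Tr[U ρ₁ U† H₂] = 2(θ_c − δ′) ν₂ tanh(βν₁), and hence ⟨W⟩ = ⟨Q_M⟩ + ⟨Q_C⟩ = 2((θ_c − δ′)ν₂ − ζᶜν₁) tanh(βν₁). -/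
open Matrix

private lemma trace_vvmul (v w : Fin 2 → ℂ) (M : Matrix (Fin 2) (Fin 2) ℂ) :
    (vecMulVec v w * M).trace = w ⬝ᵥ (M *ᵥ v) := by
  simp only [trace, diag, mul_apply, vecMulVec_apply, dotProduct, mulVec,
    Fin.sum_univ_two, Finset.mul_sum]
  ring

private lemma trace_mulvv (v w : Fin 2 → ℂ) (M : Matrix (Fin 2) (Fin 2) ℂ) :
    (M * vecMulVec v w).trace = w ⬝ᵥ (M *ᵥ v) := by
  simp only [trace, diag, mul_apply, vecMulVec_apply, dotProduct, mulVec,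
    Fin.sum_univ_two, Finset.mul_sum]
  ring

private lemma trace_vv (v w : Fin 2 → ℂ) : (vecMulVec v w).trace = w ⬝ᵥ v := by
  simp only [trace, diag, vecMulVec_apply, dotProduct, Fin.sum_univ_two]
  ring

private lemma complete2 (a b : Fin 2 → ℂ) (ha : star a ⬝ᵥ a = 1) (hb : star b ⬝ᵥ b = 1)
    (hab : star a ⬝ᵥ b = 0) :
    vecMulVec a (star a) + vecMulVec b (star b) = 1 := by
  have hba : star b ⬝ᵥ a = 0 := by
    have h2 := congrArg (starRingEnd ℂ) hab
    simp [dotProduct, Fin.sum_univ_two, Pi.star_apply] at h2 ⊢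
    linear_combination h2
  set A : Matrix (Fin 2) (Fin 2) ℂ := Matrix.of ![star a, star b] with hA
  have h1 : A * Aᴴ = 1 := by
    ext i j
    simp [dotProduct, Fin.sum_univ_two, Pi.star_apply] at ha hb hab hba
    fin_cases i <;> fin_cases j <;>
      simp [hA, mul_apply, conjTranspose_apply, Fin.sum_univ_two, Matrix.one_apply] <;>
      first
        | linear_combination ha
        | linear_combination hb
        | linear_combination hab
        | linear_combination hba
  have h2 : Aᴴ * A = 1 := mul_eq_one_comm.mp h1
  ext i j
  have h3 := congrFun (congrFun h2 i) j
  simp [hA, mul_apply, conjTranspose_apply, Fin.sum_univ_two] at h3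
  simp [vecMulVec_apply, Pi.star_apply]
  linear_combination h3

private lemma trace_channel {K : ℕ} (Kr : Fin K → Matrix (Fin 2) (Fin 2) ℂ)
    (hKr : ∑ k, (Kr k)ᴴ * Kr k = 1) (X : Matrix (Fin 2) (Fin 2) ℂ) :
    (∑ k, Kr k * X * (Kr k)ᴴ).trace = X.trace := by
  rw [trace_sum]
  have h : ∀ k, (Kr k * X * (Kr k)ᴴ).trace = ((Kr k)ᴴ * Kr k * X).trace := by
    intro k
    rw [trace_mul_comm, ← Matrix.mul_assoc]
  simp_rw [h, ← trace_sum, ← Finset.sum_mul, hKr, Matrix.one_mul]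

private lemma overlap (x v : Fin 2 → ℂ) (U : Matrix (Fin 2) (Fin 2) ℂ) :
    star x ⬝ᵥ ((U * vecMulVec v (star v) * Uᴴ) *ᵥ x)
      = (star x ⬝ᵥ (U *ᵥ v)) * (starRingEnd ℂ) (star x ⬝ᵥ (U *ᵥ v)) := by
  simp only [dotProduct, mulVec, mul_apply, vecMulVec_apply, conjTranspose_apply,
    Pi.star_apply, Fin.sum_univ_two, _root_.map_add, _root_.map_mul, Complex.conj_conj,
    Complex.star_def]
  ring

private lemma scalar_id (x : ℝ) : (((2 * Real.cosh x : ℝ) : ℂ))⁻¹ * (Real.exp (-x) : ℂ)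
    - (((2 * Real.cosh x : ℝ) : ℂ))⁻¹ * (Real.exp x : ℂ) = -(Real.tanh x : ℂ) := by
  have hr : (2 * Real.cosh x)⁻¹ * Real.exp (-x) - (2 * Real.cosh x)⁻¹ * Real.exp x
      = -Real.tanh x := by
    have h2 : (0:ℝ) < Real.exp x + Real.exp (-x) := by positivity
    rw [Real.tanh_eq_sinh_div_cosh, Real.sinh_eq, Real.cosh_eq]
    field_simp
    ring
  exact_mod_cast hr

private lemma vv_mul_vv (v w v' w' : Fin 2 → ℂ) :
    vecMulVec v w * vecMulVec v' w' = (w ⬝ᵥ v') • vecMulVec v w' := by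
  ext i j
  simp only [mul_apply, vecMulVec_apply, Matrix.smul_apply, dotProduct, Fin.sum_univ_two,
    smul_eq_mul]
  ring

/-- Averages of the undephased qubit engine: in the qubit Otto setup the
undephased average heat released, heat absorbed, and work satisfy
`Tr[ρ₁ H₁] − Tr[V Φ(U ρ₁ Uᴴ) Vᴴ H₁] = −2 ζᶜ ν₁ tanh(βν₁)`,
`Tr[Φ(U ρ₁ Uᴴ) H₂] − Tr[U ρ₁ Uᴴ H₂] = 2 (θ_c − δ′) ν₂ tanh(βν₁)`, and hence
`⟨W⟩ = ⟨Q_M⟩ + ⟨Q_C⟩ = 2 ((θ_c − δ′) ν₂ − ζᶜ ν₁) tanh(βν₁)`. -/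
theorem undephased_averages_qubit
    (β ν₁ ν₂ : ℝ) (hβ : 0 < β) (hν₁ : 0 < ν₁) (hν₂ : 0 < ν₂)
    (ep em fp fm : Fin 2 → ℂ)
    (hep : star ep ⬝ᵥ ep = 1) (hem : star em ⬝ᵥ em = 1) (hepm : star ep ⬝ᵥ em = 0)
    (hfp : star fp ⬝ᵥ fp = 1) (hfm : star fm ⬝ᵥ fm = 1) (hfpm : star fp ⬝ᵥ fm = 0)
    (H₁ H₂ ρ₁ : Matrix (Fin 2) (Fin 2) ℂ)
    (hH₁ : H₁ = (ν₁ : ℂ) • (vecMulVec ep (star ep) - vecMulVec em (star em)))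
    (hH₂ : H₂ = (ν₂ : ℂ) • (vecMulVec fp (star fp) - vecMulVec fm (star fm)))
    (hρ₁ : ρ₁ = ((2 * Real.cosh (β * ν₁) : ℝ) : ℂ)⁻¹ •
        ((Real.exp (-(β * ν₁)) : ℂ) • vecMulVec ep (star ep) +
         (Real.exp (β * ν₁) : ℂ) • vecMulVec em (star em)))
    (U V : Matrix (Fin 2) (Fin 2) ℂ)
    (hU : Uᴴ * U = 1) (hU' : U * Uᴴ = 1)
    (hV : Vᴴ * V = 1) (hV' : V * Vᴴ = 1)
    {K : ℕ} (Kr : Fin K → Matrix (Fin 2) (Fin 2) ℂ)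
    (hKr : ∑ k, (Kr k)ᴴ * Kr k = 1) (hKr' : ∑ k, Kr k * (Kr k)ᴴ = 1)
    (Φ : Matrix (Fin 2) (Fin 2) ℂ → Matrix (Fin 2) (Fin 2) ℂ)
    (hΦ : ∀ X, Φ X = ∑ k, Kr k * X * (Kr k)ᴴ)
    (δ' : ℝ) (hδ' : δ' = ‖star fp ⬝ᵥ (U *ᵥ em)‖ ^ 2)
    (θc : ℂ) (hθc : θc = star fm ⬝ᵥ (Φ (U * vecMulVec ep (star ep) * Uᴴ) *ᵥ fm))
    (ζc : ℂ) (hζc : ζc = star em ⬝ᵥ ((V * Φ (U * vecMulVec ep (star ep) * Uᴴ) * Vᴴ) *ᵥ em)) :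
    (ρ₁ * H₁).trace - (V * Φ (U * ρ₁ * Uᴴ) * Vᴴ * H₁).trace =
        -2 * ζc * (ν₁ : ℂ) * (Real.tanh (β * ν₁) : ℂ) ∧
    (Φ (U * ρ₁ * Uᴴ) * H₂).trace - (U * ρ₁ * Uᴴ * H₂).trace =
        2 * (θc - (δ' : ℂ)) * (ν₂ : ℂ) * (Real.tanh (β * ν₁) : ℂ) ∧
    ((Φ (U * ρ₁ * Uᴴ) * H₂).trace - (U * ρ₁ * Uᴴ * H₂).trace) +
      ((ρ₁ * H₁).trace - (V * Φ (U * ρ₁ * Uᴴ) * Vᴴ * H₁).trace) =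
        2 * ((θc - (δ' : ℂ)) * (ν₂ : ℂ) - ζc * (ν₁ : ℂ)) * (Real.tanh (β * ν₁) : ℂ) := by
  set P := vecMulVec ep (star ep) with hPdef
  set Q := vecMulVec em (star em) with hQdef
  set F := vecMulVec fp (star fp) with hFdef
  set G := vecMulVec fm (star fm) with hGdef
  have hPQ : P + Q = 1 := complete2 ep em hep hem hepm
  have hFG : F + G = 1 := complete2 fp fm hfp hfm hfpm
  set x : ℝ := β * ν₁ with hxdef
  set a : ℂ := (((2 * Real.cosh x : ℝ) : ℂ))⁻¹ * (Real.exp (-x) : ℂ) with hadef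
  set b : ℂ := (((2 * Real.cosh x : ℝ) : ℂ))⁻¹ * (Real.exp x : ℂ) with hbdef
  have hc : a - b = -(Real.tanh x : ℂ) := by rw [hadef, hbdef]; exact scalar_id x
  -- ρ₁ in the convenient form
  have hρ : ρ₁ = b • (1 : Matrix (Fin 2) (Fin 2) ℂ) + (a - b) • P := by
    rw [hρ₁, ← hPQ, smul_add, smul_smul, smul_smul, ← hadef, ← hbdef]
    module
  set X := U * P * Uᴴ with hXdef
  set N := Φ (U * P * Uᴴ) with hNdef
  have hNsum : N = ∑ k, Kr k * X * (Kr k)ᴴ := by rw [hNdef, hΦ]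
  -- conjugated state
  have hUρ : U * ρ₁ * Uᴴ = b • (1 : Matrix (Fin 2) (Fin 2) ℂ) + (a - b) • X := by
    rw [hρ, Matrix.mul_add, Matrix.add_mul, Matrix.mul_smul, Matrix.smul_mul,
      Matrix.mul_smul, Matrix.smul_mul, Matrix.mul_one, hU', hXdef]
  have hΦρ : Φ (U * ρ₁ * Uᴴ) = b • (1 : Matrix (Fin 2) (Fin 2) ℂ) + (a - b) • N := by
    rw [hΦ, hUρ, hNsum]
    simp only [Matrix.mul_add, Matrix.add_mul, Matrix.mul_smul, Matrix.smul_mul,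
      Matrix.mul_one, Finset.sum_add_distrib, ← Finset.smul_sum]
    rw [hKr']
  -- traces
  have htrP : P.trace = 1 := by rw [hPdef, trace_vv, hep]
  have htrQ : Q.trace = 1 := by rw [hQdef, trace_vv, hem]
  have htrF : F.trace = 1 := by rw [hFdef, trace_vv, hfp]
  have htrG : G.trace = 1 := by rw [hGdef, trace_vv, hfm]
  have htrX : X.trace = 1 := by
    rw [hXdef, trace_mul_cycle, hU, Matrix.one_mul, htrP]
  have htrN : N.trace = 1 := by rw [hNsum, trace_channel Kr hKr, htrX]
  set M2 := V * N * Vᴴ with hM2def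
  have htrM2 : M2.trace = 1 := by
    rw [hM2def, trace_mul_cycle, hV, Matrix.one_mul, htrN]
  -- ζc as a trace
  have hζtr : (M2 * Q).trace = ζc := by
    rw [hQdef, trace_mulvv, hζc, hM2def, hNdef, hPdef]
  have hζtr' : (M2 * P).trace = 1 - ζc := by
    have h := congrArg trace (congrArg (fun Y => M2 * Y) hPQ)
    simp only [Matrix.mul_add, trace_add, Matrix.mul_one] at h
    rw [hζtr, htrM2] at h
    linear_combination h
  -- θc as a trace
  have hθtr : (N * G).trace = θc := by
    rw [hGdef, trace_mulvv, hθc, hNdef, hPdef]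
  have hθtr' : (N * F).trace = 1 - θc := by
    have h := congrArg trace (congrArg (fun Y => N * Y) hFG)
    simp only [Matrix.mul_add, trace_add, Matrix.mul_one] at h
    rw [hθtr, htrN] at h
    linear_combination h
  -- δ' facts
  have hδc : ((δ' : ℝ) : ℂ) = (star fp ⬝ᵥ (U *ᵥ em)) * (starRingEnd ℂ) (star fp ⬝ᵥ (U *ᵥ em)) := by
    rw [hδ', ← Complex.normSq_eq_norm_sq, Complex.mul_conj]
  have hXF : (X * F).trace = 1 - (δ' : ℂ) := by
    have hY : X + U * Q * Uᴴ = 1 := by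
      rw [hXdef]
      calc U * P * Uᴴ + U * Q * Uᴴ = U * (P + Q) * Uᴴ := by
            rw [Matrix.mul_add, Matrix.add_mul]
        _ = 1 := by rw [hPQ, Matrix.mul_one, hU']
    have hYv : (U * Q * Uᴴ * F).trace = (δ' : ℂ) := by
      rw [hFdef, trace_mulvv, hQdef, overlap fp em U, hδc]
    have h := congrArg trace (congrArg (fun Y => Y * F) hY)
    simp only [Matrix.add_mul, trace_add, Matrix.one_mul] at h
    rw [hYv] at h
    rw [htrF] at h
    linear_combination h
  have hXG : (X * G).trace = (δ' : ℂ) := by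
    have h := congrArg trace (congrArg (fun Y => X * Y) hFG)
    simp only [Matrix.mul_add, trace_add, Matrix.mul_one] at h
    rw [hXF, htrX] at h
    linear_combination h
  -- P-traces
  have hPH : (P * P).trace = 1 := by
    rw [hPdef, vv_mul_vv, trace_smul, trace_vv, hep]
    simp
  have hPQ0 : (P * Q).trace = 0 := by
    rw [hPdef, hQdef, vv_mul_vv, trace_smul, hepm]
    simp
  -- main computations
  have e1 : (ρ₁ * H₁).trace - (V * Φ (U * ρ₁ * Uᴴ) * Vᴴ * H₁).trace =
      -2 * ζc * (ν₁ : ℂ) * (Real.tanh x : ℂ) := by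
    have hVΦ : V * Φ (U * ρ₁ * Uᴴ) * Vᴴ = b • (1 : Matrix (Fin 2) (Fin 2) ℂ) + (a - b) • M2 := by
      rw [hΦρ, Matrix.mul_add, Matrix.add_mul, Matrix.mul_smul, Matrix.smul_mul,
        Matrix.mul_smul, Matrix.smul_mul, Matrix.mul_one, hV', hM2def]
    rw [hVΦ, hρ, hH₁]
    simp only [Matrix.add_mul, Matrix.smul_mul, Matrix.one_mul, trace_add, trace_smul,
      Matrix.mul_smul, Matrix.mul_sub, Matrix.sub_mul, trace_sub, smul_eq_mul]
    rw [hPH, hPQ0, hζtr, hζtr', htrP, htrQ, hc]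
    ring
  have e2 : (Φ (U * ρ₁ * Uᴴ) * H₂).trace - (U * ρ₁ * Uᴴ * H₂).trace =
      2 * (θc - (δ' : ℂ)) * (ν₂ : ℂ) * (Real.tanh x : ℂ) := by
    rw [hΦρ, hUρ, hH₂]
    simp only [Matrix.add_mul, Matrix.smul_mul, Matrix.one_mul, trace_add, trace_smul,
      Matrix.mul_smul, Matrix.mul_sub, Matrix.sub_mul, trace_sub, smul_eq_mul]
    rw [hθtr, hθtr', hXF, hXG, htrF, htrG, hc]
    ring
  refine ⟨e1, e2, ?_⟩
  rw [e1, e2]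
  ring
end
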